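/- Let p ∈ (0,1), q = 1 − p. For every dynamic environment ξ : ℕ × ℤ → {0,1}, every n ∈ ℕ, every c ∈ ℤ, and all starting points x, y ∈ ℤ with x ≤ y and y − x even, the quenched exceedance probabilities are monotone in the starting point: Σ_{m∈ℤ, m ≥ c} q_n^x(ξ, m) ≤ Σ_{m∈ℤ, m ≥ c} q_n^y(ξ, m). -/

import Mathlib

open Finset

/-- Position after `k` steps of the nearest-neighbor path started at `x`
with up/down steps given by `s`. -/
def pathPos (x : ℤ) {n : ℕ} (s : Fin n → Bool) (k : ℕ) : ℤ :=
  x + ∑ i ∈ Finset.univ.filter (fun i : Fin n => (i : ℕ) < k), (if s i then (1 : ℤ) else -1)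

/-- The quenched `n`-step transition probability `q_n^x(ξ, m)` of the random walk in the
dynamic environment `ξ : ℕ × ℤ → {0,1}` started at `x`. -/
noncomputable def quenchedProb (p : ℝ) (ξ : ℕ → ℤ → Bool) (n : ℕ) (x m : ℤ) : ℝ :=
  ∑ s ∈ Finset.univ.filter (fun s : Fin n → Bool => pathPos x s n = m),
    ∏ k : Fin n, (if ξ k (pathPos x s k) = s k then p else 1 - p)

/-- The quenched exceedance probability `Σ_{m ≥ c} q_n^x(ξ, m)` written as a finite
sum over step sequences. -/
noncomputable def excProb (p : ℝ) (ξ : ℕ → ℤ → Bool) (n : ℕ) (c x : ℤ) : ℝ :=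
  ∑ s : Fin n → Bool, if c ≤ pathPos x s n then
    ∏ k : Fin n, (if ξ k (pathPos x s k) = s k then p else 1 - p) else 0

lemma pathPos_zero (x : ℤ) {n : ℕ} (s : Fin n → Bool) : pathPos x s 0 = x := by
  simp [pathPos]

lemma pathPos_cons (x : ℤ) {n : ℕ} (b : Bool) (s : Fin n → Bool) (k : ℕ) :
    pathPos x (Fin.cons b s) (k + 1) = pathPos (x + if b then (1 : ℤ) else -1) s k := by
  unfold pathPos
  rw [Finset.sum_filter, Finset.sum_filter, Fin.sum_univ_succ]
  simp only [Fin.cons_zero, Fin.cons_succ, Fin.val_zero, Fin.val_succ,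
    Nat.zero_lt_succ, if_true, Nat.succ_lt_succ_iff]
  ring

lemma excProb_succ (p : ℝ) (ξ : ℕ → ℤ → Bool) (n : ℕ) (c x : ℤ) :
    excProb p ξ (n + 1) c x =
      (if ξ 0 x then p else 1 - p) * excProb p (fun k => ξ (k + 1)) n c (x + 1)
      + (if ξ 0 x then 1 - p else p) * excProb p (fun k => ξ (k + 1)) n c (x - 1) := by
  unfold excProb
  rw [← (Fin.consEquiv (fun _ : Fin (n + 1) => Bool)).sum_comp
    (fun s : Fin (n + 1) → Bool => if c ≤ pathPos x s (n + 1) then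
      ∏ k : Fin (n + 1), (if ξ k (pathPos x s k) = s k then p else 1 - p) else 0)]
  rw [Fintype.sum_prod_type, Fintype.sum_bool]
  have key : ∀ (b : Bool) (s : Fin n → Bool),
      (if c ≤ pathPos x (Fin.cons b s) (n + 1) then
        ∏ k : Fin (n + 1), (if ξ k (pathPos x (Fin.cons b s) k) = (Fin.cons b s : Fin (n+1) → Bool) k then p
          else 1 - p) else 0)
      = (if ξ 0 x = b then p else 1 - p) *
        (if c ≤ pathPos (x + if b then (1 : ℤ) else -1) s n then
          ∏ k : Fin n, (if ξ (k + 1) (pathPos (x + if b then (1 : ℤ) else -1) s k) = s k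
            then p else 1 - p) else 0) := by
    intro b s
    rw [Fin.prod_univ_succ]
    simp only [Fin.cons_zero, Fin.cons_succ, Fin.val_zero, Fin.val_succ, pathPos_zero,
      pathPos_cons, mul_ite, mul_zero]
  have hce : ∀ (b : Bool) (s : Fin n → Bool),
      (Fin.consEquiv (fun _ : Fin (n + 1) => Bool)) (b, s) = Fin.cons b s := fun _ _ => rfl
  simp only [hce, key]
  simp only [← Finset.mul_sum]
  cases h : ξ 0 x <;> simp [h, sub_eq_add_neg]

lemma even_shift {a b : ℤ} (h : Even (b - a)) (d : ℤ) : Even (b + d - (a + d)) := by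
  have : b + d - (a + d) = b - a := by ring
  rwa [this]

lemma excProb_mono (p : ℝ) (hp0 : 0 ≤ p) (hp1 : p ≤ 1) (n : ℕ) :
    ∀ (ξ : ℕ → ℤ → Bool) (c x y : ℤ), x ≤ y → Even (y - x) →
      excProb p ξ n c x ≤ excProb p ξ n c y := by
  induction n with
  | zero =>
    intro ξ c x y hxy _
    have hE : ∀ z : ℤ, excProb p ξ 0 c z = if c ≤ z then 1 else 0 := by
      intro z; simp [excProb, pathPos_zero]
    rw [hE, hE]
    split_ifs with h1 h2
    · exact le_refl 1
    · exact absurd (le_trans h1 hxy) h2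
    · norm_num
    · exact le_refl 0
  | succ n ih =>
    intro ξ c x y hxy hpar
    rcases eq_or_lt_of_le hxy with rfl | hlt
    · exact le_refl _
    · have h2 : x + 2 ≤ y := by
        obtain ⟨k, hk⟩ := hpar; omega
      rw [excProb_succ, excProb_succ]
      have hA : excProb p (fun k => ξ (k + 1)) n c (x + 1)
          ≤ excProb p (fun k => ξ (k + 1)) n c (y + 1) := by
        apply ih _ _ _ _ (by omega) (even_shift hpar 1)
      have hB : excProb p (fun k => ξ (k + 1)) n c (x - 1)
          ≤ excProb p (fun k => ξ (k + 1)) n c (y - 1) := by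
        apply ih _ _ _ _ (by omega) (even_shift hpar (-1))
      have hC : excProb p (fun k => ξ (k + 1)) n c (x + 1)
          ≤ excProb p (fun k => ξ (k + 1)) n c (y - 1) := by
        apply ih _ _ _ _ (by omega)
        · obtain ⟨k, hk⟩ := hpar; exact ⟨k - 1, by omega⟩
      have hD : excProb p (fun k => ξ (k + 1)) n c (x - 1)
          ≤ excProb p (fun k => ξ (k + 1)) n c (y + 1) := by
        apply ih _ _ _ _ (by omega)
        · obtain ⟨k, hk⟩ := hpar; exact ⟨k + 1, by omega⟩
      have h1p : (0 : ℝ) ≤ 1 - p := by linarith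
      cases hx : ξ 0 x <;> cases hy : ξ 0 y <;> simp only [Bool.false_eq_true, ↓reduceIte]
      · exact add_le_add (mul_le_mul_of_nonneg_left hA h1p)
          (mul_le_mul_of_nonneg_left hB hp0)
      · exact le_trans (add_le_add (mul_le_mul_of_nonneg_left hC h1p)
          (mul_le_mul_of_nonneg_left hD hp0)) (le_of_eq (by ring))
      · exact le_trans (add_le_add (mul_le_mul_of_nonneg_left hC hp0)
          (mul_le_mul_of_nonneg_left hD h1p)) (le_of_eq (by ring))
      · exact add_le_add (mul_le_mul_of_nonneg_left hA hp0)
          (mul_le_mul_of_nonneg_left hB h1p)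

lemma tsum_exceedance (p : ℝ) (ξ : ℕ → ℤ → Bool) (n : ℕ) (c x : ℤ) :
    (∑' m : ℤ, if c ≤ m then quenchedProb p ξ n x m else 0) = excProb p ξ n c x := by
  classical
  set T : Finset ℤ := Finset.image (fun s : Fin n → Bool => pathPos x s n) Finset.univ with hT
  have h0 : ∀ m : ℤ, m ∉ T → (if c ≤ m then quenchedProb p ξ n x m else 0) = 0 := by
    intro m hm
    have hq : quenchedProb p ξ n x m = 0 := by
      unfold quenchedProb
      apply Finset.sum_eq_zero
      intro s hs
      exfalso
      rw [Finset.mem_filter] at hs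
      exact hm (hs.2 ▸ Finset.mem_image_of_mem (fun s => pathPos x s n) (Finset.mem_univ s))
    rw [hq]
    simp
  rw [tsum_eq_sum h0]
  have step : ∀ m ∈ T, (if c ≤ m then quenchedProb p ξ n x m else 0) =
      ∑ s ∈ Finset.univ.filter (fun s : Fin n → Bool => pathPos x s n = m),
        (if c ≤ pathPos x s n then
          ∏ k : Fin n, (if ξ k (pathPos x s k) = s k then p else 1 - p) else 0) := by
    intro m _
    by_cases hc : c ≤ m
    · rw [if_pos hc]
      unfold quenchedProb
      apply Finset.sum_congr rfl
      intro s hs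
      rw [Finset.mem_filter] at hs
      rw [if_pos (hs.2 ▸ hc)]
    · rw [if_neg hc]
      symm
      apply Finset.sum_eq_zero
      intro s hs
      rw [Finset.mem_filter] at hs
      rw [if_neg (hs.2 ▸ hc)]
  rw [Finset.sum_congr rfl step]
  rw [Finset.sum_fiberwise_of_maps_to (fun s _ => Finset.mem_image_of_mem _ (Finset.mem_univ s))]
  rfl

/-- Monotonicity in the starting point: two walks in the same environment started at
ordered points of equal parity can be coupled to remain ordered, so
`Σ_{m ≥ c} q_n^x(ξ, m) ≤ Σ_{m ≥ c} q_n^y(ξ, m)` for `x ≤ y` with `y − x` even. -/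
theorem quenched_exceedance_monotone (p : ℝ) (hp0 : 0 < p) (hp1 : p < 1)
    (ξ : ℕ → ℤ → Bool) (n : ℕ) (c : ℤ) (x y : ℤ) (hxy : x ≤ y) (hpar : Even (y - x)) :
    (∑' m : ℤ, if c ≤ m then quenchedProb p ξ n x m else 0) ≤
      ∑' m : ℤ, if c ≤ m then quenchedProb p ξ n y m else 0 := by
  rw [tsum_exceedance, tsum_exceedance]
  exact excProb_mono p hp0.le hp1.le n ξ c x y hxy hpar
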